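/- arXiv:math/0410509 — 4 statements merged into one kernel-verified Lean document; each statement's English description precedes it below -/
import Mathlib

section
/- Let A > 0 be real, B ∈ ℂ with |B| < A, and V ∈ ℝ. Then the 2-dimensional Lebesgue measure of the set { z ∈ ℂ : A|z|² + Re(B z²) < V } equals π·max(V,0)/√(A² − |B|²). -/
open MeasureTheory
open scoped ENNReal

noncomputable def fquad (p q : ℝ) (u : ℂ) : ℂ →ₗ[ℝ] ℂ where
  toFun z := (↑(p * (u * z).re) + ↑(q * (u * z).im) * Complex.I)
  map_add' z w := by
    simp only [mul_add, Complex.add_re, Complex.add_im]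
    push_cast
    ring
  map_smul' r z := by
    simp only [RingHom.id_apply, Complex.real_smul]
    rw [show u * ((r : ℂ) * z) = (r : ℂ) * (u * z) by ring]
    simp only [Complex.re_ofReal_mul, Complex.im_ofReal_mul]
    push_cast
    ring

lemma fquad_det (p q : ℝ) (u : ℂ) :
    LinearMap.det (fquad p q u) = p * q * Complex.normSq u := by
  rw [← LinearMap.det_toMatrix Complex.basisOneI, Matrix.det_fin_two]
  simp [LinearMap.toMatrix_apply, Complex.coe_basisOneI_repr, Complex.coe_basisOneI, fquad,
    Complex.normSq_apply]
  ring

/-- The area of the sublevel set `{z ∈ ℂ : A|z|² + Re(Bz²) < V}` with `|B| < A` is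
`π·max(V,0)/√(A² - |B|²)`. -/
theorem area_quadratic_sublevel (A : ℝ) (hA : 0 < A) (B : ℂ) (hB : ‖B‖ < A)
    (V : ℝ) :
    volume {z : ℂ | A * ‖z‖ ^ 2 + (B * z ^ 2).re < V}
      = ENNReal.ofReal (Real.pi * max V 0 / Real.sqrt (A ^ 2 - ‖B‖ ^ 2)) := by
  set b := ‖B‖ with hbdef
  have hb : 0 ≤ b := norm_nonneg B
  have hApb : 0 < A + b := by linarith
  have hAmb : 0 < A - b := by linarith
  set u := Complex.exp ((B.arg / 2 : ℝ) * Complex.I) with hudef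
  have habsu : ‖u‖ = 1 := Complex.norm_exp_ofReal_mul_I _
  have hnu : Complex.normSq u = 1 := by
    rw [← Complex.sq_norm, habsu]; norm_num
  have hu2 : u * u = Complex.exp ((B.arg : ℝ) * Complex.I) := by
    rw [hudef, ← Complex.exp_add]; congr 1; push_cast; ring
  have hBu : (b : ℂ) * (u * u) = B := by
    rw [hu2]; exact Complex.norm_mul_exp_arg_mul_I B
  set p := Real.sqrt (A + b) with hpdef
  set q := Real.sqrt (A - b) with hqdef
  have hp : 0 < p := Real.sqrt_pos.mpr hApb
  have hq : 0 < q := Real.sqrt_pos.mpr hAmb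
  have hp2 : p ^ 2 = A + b := Real.sq_sqrt hApb.le
  have hq2 : q ^ 2 = A - b := Real.sq_sqrt hAmb.le
  have key : ∀ z : ℂ, A * ‖z‖ ^ 2 + (B * z ^ 2).re
      = ‖fquad p q u z‖ ^ 2 := by
    intro z
    have hre : (fquad p q u z).re = p * (u * z).re := by simp [fquad]
    have him : (fquad p q u z).im = q * (u * z).im := by simp [fquad]
    rw [Complex.sq_norm (fquad p q u z), Complex.normSq_apply, hre, him]
    have h1 : ‖z‖ ^ 2 = Complex.normSq (u * z) := by
      rw [Complex.sq_norm, Complex.normSq_mul, hnu, one_mul]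
    have h2 : B * z ^ 2 = (b : ℂ) * ((u * z) * (u * z)) := by
      rw [← hBu]; ring
    have h3 : (B * z ^ 2).re = b * ((u*z).re * (u*z).re - (u*z).im * (u*z).im) := by
      rw [h2, Complex.re_ofReal_mul, Complex.mul_re]
    rw [h3, h1, Complex.normSq_apply]
    linear_combination (-(u*z).re*(u*z).re) * hp2 + (-(u*z).im*(u*z).im) * hq2
  rcases le_or_gt V 0 with hV | hV
  · have hempty : {z : ℂ | A * ‖z‖ ^ 2 + (B * z ^ 2).re < V} = ∅ := by
      rw [Set.eq_empty_iff_forall_notMem]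
      intro z hz
      have h0 : 0 ≤ A * ‖z‖ ^ 2 + (B * z ^ 2).re := by
        rw [key z]; positivity
      exact absurd hz (by simp only [Set.mem_setOf_eq]; linarith)
    rw [hempty, max_eq_right hV]
    simp
  · have hdet : LinearMap.det (fquad p q u) = p * q := by
      rw [fquad_det, hnu, mul_one]
    have hdet' : LinearMap.det (fquad p q u) ≠ 0 := by
      rw [hdet]; positivity
    have hset : {z : ℂ | A * ‖z‖ ^ 2 + (B * z ^ 2).re < V}
        = fquad p q u ⁻¹' Metric.ball 0 (Real.sqrt V) := by
      ext z
      simp only [Set.mem_setOf_eq, Set.mem_preimage, Metric.mem_ball, Complex.dist_eq, sub_zero]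
      rw [key z]
      exact (Real.lt_sqrt (norm_nonneg _)).symm
    rw [hset, Measure.addHaar_preimage_linearMap volume hdet', Complex.volume_ball]
    rw [hdet, abs_of_pos (by positivity : (0:ℝ) < (p*q)⁻¹)]
    have hsq : Real.sqrt (A ^ 2 - b ^ 2) = p * q := by
      rw [show A ^ 2 - b ^ 2 = (A + b) * (A - b) by ring, Real.sqrt_mul hApb.le]
    rw [hsq, max_eq_left hV.le]
    rw [← ENNReal.ofReal_pow (Real.sqrt_nonneg V), Real.sq_sqrt hV.le,
      ← ENNReal.ofReal_coe_nnreal, NNReal.coe_real_pi, ← ENNReal.ofReal_mul (by positivity),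
      ← ENNReal.ofReal_mul (by positivity)]
    congr 1
    field_simp
end

section
/- Let m ≥ 1, let T : ℂ^m → ℂ^m be an invertible ℂ-linear map with component linear functionals T₁, …, T_m (so Tz = (T₁z, …, T_m z)), let φ₁, …, φ_m ≥ 0 be real numbers, and let V > 0. Then the 2m-dimensional Lebesgue measure of the set { z ∈ ℂ^m : Σ_{j=1}^m ( √(1+φ_j²) |T_j z|² + φ_j Re((T_j z)²) ) < V } equals π^m V^m / ( m! · |det T|² ), where det T is the determinant of the complex matrix of T. -/
open MeasureTheory
open scoped ENNReal

noncomputable section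

abbrev Eucl (n : ℕ) := EuclideanSpace ℂ (Fin n)

instance (n : ℕ) : MeasurableSpace (Eucl n) := MeasurableSpace.comap WithLp.ofLp MeasurableSpace.pi
instance (n : ℕ) : BorelSpace (Eucl n) := PiLp.borelSpace _

open Matrix in
lemma det_realify (m : ℕ) (M : Matrix (Fin m) (Fin m) ℂ) :
    (Matrix.fromBlocks (M.map Complex.re) (-(M.map Complex.im)) (M.map Complex.im)
      (M.map Complex.re)).det = Complex.normSq M.det := by
  apply Complex.ofReal_injective
  set A : Matrix (Fin m) (Fin m) ℂ := M.map (fun z => (z.re : ℂ)) with hA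
  set B : Matrix (Fin m) (Fin m) ℂ := M.map (fun z => (z.im : ℂ)) with hB
  have h1 : ((Matrix.fromBlocks (M.map Complex.re) (-(M.map Complex.im)) (M.map Complex.im)
      (M.map Complex.re)).det : ℂ)
      = (Matrix.fromBlocks A (-B) B A).det := by
    have := (algebraMap ℝ ℂ).map_det (Matrix.fromBlocks (M.map Complex.re) (-(M.map Complex.im))
      (M.map Complex.im) (M.map Complex.re))
    rw [RingHom.mapMatrix_apply] at this
    rw [show ((Matrix.fromBlocks (M.map Complex.re) (-(M.map Complex.im)) (M.map Complex.im)
      (M.map Complex.re)).det : ℂ) = algebraMap ℝ ℂ (Matrix.fromBlocks (M.map Complex.re)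
      (-(M.map Complex.im)) (M.map Complex.im) (M.map Complex.re)).det from rfl, this]
    congr 1
    ext i j
    rcases i with i | i <;> rcases j with j | j <;>
      simp [A, B, Matrix.map_apply, Matrix.fromBlocks_apply₁₁, Matrix.fromBlocks_apply₁₂,
        Matrix.fromBlocks_apply₂₁, Matrix.fromBlocks_apply₂₂]
  rw [h1]
  set P : Matrix (Fin m ⊕ Fin m) (Fin m ⊕ Fin m) ℂ :=
    Matrix.fromBlocks 1 0 (Complex.I • 1) 1 with hP
  set Q : Matrix (Fin m ⊕ Fin m) (Fin m ⊕ Fin m) ℂ :=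
    Matrix.fromBlocks 1 0 (-(Complex.I • 1)) 1 with hQ
  have hPdet : P.det = 1 := by simp [hP, Matrix.det_fromBlocks_zero₁₂]
  have hQdet : Q.det = 1 := by simp [hQ, Matrix.det_fromBlocks_zero₁₂]
  have key : P * ((Matrix.fromBlocks A (-B) B A) * Q)
      = Matrix.fromBlocks (A + Complex.I • B) (-B) 0 (A - Complex.I • B) := by
    rw [hP, hQ, Matrix.fromBlocks_multiply, Matrix.fromBlocks_multiply]
    ext i j
    rcases i with i | i <;> rcases j with j | j <;>
      simp only [Matrix.fromBlocks_apply₁₁, Matrix.fromBlocks_apply₁₂,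
        Matrix.fromBlocks_apply₂₁, Matrix.fromBlocks_apply₂₂, Matrix.one_mul, Matrix.mul_one,
        Matrix.zero_mul, Matrix.mul_zero, Matrix.smul_mul, Matrix.mul_smul, smul_smul,
        Complex.I_mul_I, add_zero, zero_add, Matrix.mul_neg, Matrix.neg_mul, neg_neg,
        Matrix.add_apply, Matrix.smul_apply, Matrix.neg_apply, Matrix.zero_apply, smul_eq_mul,
        Matrix.sub_apply, neg_smul, one_smul] <;>
      ring_nf <;>
      simp [Complex.I_sq] <;>
      ring
  have h2 : (Matrix.fromBlocks A (-B) B A).det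
      = (A + Complex.I • B).det * (A - Complex.I • B).det := by
    calc (Matrix.fromBlocks A (-B) B A).det
        = P.det * (Matrix.fromBlocks A (-B) B A).det * Q.det := by
          rw [hPdet, hQdet]; ring
      _ = (P * ((Matrix.fromBlocks A (-B) B A) * Q)).det := by
          rw [Matrix.det_mul, Matrix.det_mul]; ring
      _ = _ := by rw [key, Matrix.det_fromBlocks_zero₂₁]
  have hAB : A + Complex.I • B = M := by
    ext i j
    simp only [Matrix.add_apply, Matrix.smul_apply, Matrix.map_apply, smul_eq_mul, A, B]
    rw [mul_comm, Complex.re_add_im]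
  have hAB' : A - Complex.I • B = M.map (starRingEnd ℂ) := by
    ext i j
    simp [A, B, Matrix.map_apply, Complex.ext_iff]
  have hstar := (starRingEnd ℂ).map_det M
  rw [RingHom.mapMatrix_apply] at hstar
  rw [h2, hAB, hAB', ← hstar, Complex.mul_conj]

def dmap (a : ℝ) : ℂ →ₗ[ℝ] ℂ where
  toFun z := (↑(a * z.re) : ℂ) + (↑(z.im / a) : ℂ) * Complex.I
  map_add' z w := by simp [Complex.ext_iff]; constructor <;> ring
  map_smul' r z := by simp [Complex.ext_iff, Complex.smul_re, Complex.smul_im]; constructor <;> ring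

@[simp] lemma dmap_re (a : ℝ) (z : ℂ) : (dmap a z).re = a * z.re := by simp [dmap]
@[simp] lemma dmap_im (a : ℝ) (z : ℂ) : (dmap a z).im = z.im / a := by simp [dmap]

def Dmap (m : ℕ) (s : Fin m → ℝ) : Eucl m →ₗ[ℝ] Eucl m :=
  (WithLp.linearEquiv 2 ℝ (Fin m → ℂ)).symm.toLinearMap ∘ₗ
    LinearMap.pi (fun j => (dmap (s j)).comp (LinearMap.proj j)) ∘ₗ
    (WithLp.linearEquiv 2 ℝ (Fin m → ℂ)).toLinearMap

@[simp] lemma Dmap_apply (m : ℕ) (s : Fin m → ℝ) (x : Eucl m) (j : Fin m) :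
    Dmap m s x j = dmap (s j) (x j) := rfl

def cBasis (m : ℕ) : Module.Basis (Fin m) ℂ (Eucl m) := PiLp.basisFun 2 ℂ (Fin m)
def rBasis (m : ℕ) : Module.Basis (Fin 2 × Fin m) ℝ (Eucl m) := Complex.basisOneI.smulTower (cBasis m)
def sumEquiv (m : ℕ) : Fin 2 × Fin m ≃ Fin m ⊕ Fin m :=
  (finTwoEquiv.prodCongr (Equiv.refl (Fin m))).trans (Equiv.boolProdEquivSum (Fin m))

open Matrix in
lemma toMatrix_restrict (m : ℕ) (f : Eucl m →ₗ[ℂ] Eucl m) :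
    LinearMap.toMatrix (rBasis m) (rBasis m) (f.restrictScalars ℝ)
      = (Matrix.fromBlocks ((LinearMap.toMatrix (cBasis m) (cBasis m) f).map Complex.re)
          (-((LinearMap.toMatrix (cBasis m) (cBasis m) f).map Complex.im))
          ((LinearMap.toMatrix (cBasis m) (cBasis m) f).map Complex.im)
          ((LinearMap.toMatrix (cBasis m) (cBasis m) f).map Complex.re)).submatrix
          (sumEquiv m) (sumEquiv m) := by
  ext ⟨k, j⟩ ⟨k', j'⟩
  rw [LinearMap.toMatrix_apply, Matrix.submatrix_apply]
  rw [rBasis, Module.Basis.smulTower_apply, LinearMap.coe_restrictScalars, _root_.map_smul,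
    Module.Basis.smulTower_repr]
  have hM : ∀ j, (cBasis m).repr (Complex.basisOneI k' • f (cBasis m j')) j
      = Complex.basisOneI k' * LinearMap.toMatrix (cBasis m) (cBasis m) f j j' := by
    intro j
    rw [_root_.map_smul, LinearMap.toMatrix_apply]
    rfl
  rw [hM]
  fin_cases k <;> fin_cases k' <;>
    simp [sumEquiv, finTwoEquiv, Matrix.map_apply, Matrix.neg_apply, Complex.coe_basisOneI,
      Matrix.fromBlocks_apply₁₁, Matrix.fromBlocks_apply₁₂,
      Matrix.fromBlocks_apply₂₁, Matrix.fromBlocks_apply₂₂, Complex.coe_basisOneI_repr]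

lemma det_restrict (m : ℕ) (f : Eucl m →ₗ[ℂ] Eucl m) :
    LinearMap.det (f.restrictScalars ℝ) = Complex.normSq (LinearMap.det f) := by
  rw [← LinearMap.det_toMatrix (rBasis m), toMatrix_restrict,
    Matrix.det_submatrix_equiv_self, det_realify, LinearMap.det_toMatrix]

open Matrix in
lemma toMatrix_Dmap (m : ℕ) (s : Fin m → ℝ) :
    LinearMap.toMatrix (rBasis m) (rBasis m) (Dmap m s)
      = (Matrix.fromBlocks (Matrix.diagonal s) 0 0
          (Matrix.diagonal (fun j => (s j)⁻¹))).submatrix (sumEquiv m) (sumEquiv m) := by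
  ext ⟨k, j⟩ ⟨k', j'⟩
  rw [LinearMap.toMatrix_apply, Matrix.submatrix_apply]
  rw [rBasis, Module.Basis.smulTower_apply, Module.Basis.smulTower_repr]
  have hc : ∀ j, (cBasis m).repr (Dmap m s (Complex.basisOneI k' • cBasis m j')) j
      = dmap (s j) (Complex.basisOneI k' * (if j = j' then 1 else 0)) := by
    intro j
    have h1 : (cBasis m).repr (Dmap m s (Complex.basisOneI k' • cBasis m j')) j
        = (Dmap m s (Complex.basisOneI k' • cBasis m j')) j := by
      simp [cBasis, PiLp.basisFun_repr]
    rw [h1, Dmap_apply]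
    congr 1
    have h2 : (cBasis m j' : Eucl m) j = (if j = j' then 1 else 0) := by
      simp [cBasis, PiLp.basisFun_apply, EuclideanSpace.single_apply, Pi.single_apply]
    calc (Complex.basisOneI k' • cBasis m j' : Eucl m) j
        = Complex.basisOneI k' * (cBasis m j' : Eucl m) j := rfl
      _ = _ := by rw [h2]
  rw [hc]
  by_cases hjj : j = j' <;> fin_cases k <;> fin_cases k' <;>
    simp [hjj, sumEquiv, finTwoEquiv, Matrix.diagonal_apply, Complex.coe_basisOneI,
      Complex.coe_basisOneI_repr, Matrix.fromBlocks_apply₁₁, Matrix.fromBlocks_apply₁₂,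
      Matrix.fromBlocks_apply₂₁, Matrix.fromBlocks_apply₂₂, Matrix.map_apply, one_div]

lemma det_Dmap (m : ℕ) (s : Fin m → ℝ) (hs : ∀ j, s j ≠ 0) : LinearMap.det (Dmap m s) = 1 := by
  rw [← LinearMap.det_toMatrix (rBasis m), toMatrix_Dmap, Matrix.det_submatrix_equiv_self,
    Matrix.det_fromBlocks_zero₂₁, Matrix.det_diagonal, Matrix.det_diagonal,
    ← Finset.prod_mul_distrib]
  simp [hs]

/-- The volume of the ellipsoidal sublevel set
`{z ∈ ℂᵐ : Σ_j (√(1+φ_j²)|T_j z|² + φ_j Re((T_j z)²)) < V}` for an invertible `ℂ`-linear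
map `T` with component functionals `T_j` and `φ_j ≥ 0` is `πᵐ Vᵐ / (m!·|det T|²)`. -/
theorem volume_normalized_sublevel (m : ℕ) (hm : 1 ≤ m) (T : Eucl m ≃ₗ[ℂ] Eucl m)
    (φ : Fin m → ℝ) (hφ : ∀ j, 0 ≤ φ j) (V : ℝ) (hV : 0 < V) :
    volume {z : Eucl m |
        ∑ j, (Real.sqrt (1 + φ j ^ 2) * ‖T z j‖ ^ 2 + φ j * ((T z j) ^ 2).re) < V}
      = ENNReal.ofReal
          (Real.pi ^ m * V ^ m /
            (Nat.factorial m * ‖LinearMap.det (T : Eucl m →ₗ[ℂ] Eucl m)‖ ^ 2)) := by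
  haveI : Nonempty (Fin m) := ⟨⟨0, hm⟩⟩
  haveI : Nontrivial (Eucl m) := by
    refine ⟨WithLp.toLp 2 (fun _ => 1 : Fin m → ℂ), 0, fun h =>
      one_ne_zero (congrFun (congrArg WithLp.ofLp h) ⟨0, hm⟩ : (1 : ℂ) = 0)⟩
  set s : Fin m → ℝ := fun j => Real.sqrt (Real.sqrt (1 + φ j ^ 2) + φ j) with hs_def
  have hsq : ∀ j, Real.sqrt (1 + φ j ^ 2) ^ 2 = 1 + φ j ^ 2 := fun j =>
    Real.sq_sqrt (by positivity)
  have hs_pos : ∀ j, 0 < s j := by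
    intro j
    apply Real.sqrt_pos.2
    have h1 : (1:ℝ) ≤ Real.sqrt (1 + φ j ^ 2) := Real.one_le_sqrt.2 (by nlinarith [hφ j])
    nlinarith [hφ j]
  have hs_sq : ∀ j, s j ^ 2 = Real.sqrt (1 + φ j ^ 2) + φ j := by
    intro j
    apply Real.sq_sqrt
    have h1 : (1:ℝ) ≤ Real.sqrt (1 + φ j ^ 2) := Real.one_le_sqrt.2 (by nlinarith [hφ j])
    nlinarith [hφ j]
  have hs_inv_sq : ∀ j, (s j)⁻¹ ^ 2 = Real.sqrt (1 + φ j ^ 2) - φ j := by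
    intro j
    have h2 : (s j ^ 2) * (Real.sqrt (1 + φ j ^ 2) - φ j) = 1 := by
      rw [hs_sq j]; nlinarith [hsq j]
    have h3 := hs_pos j
    field_simp
    nlinarith [h2, hs_sq j]
  set G : Eucl m →ₗ[ℝ] Eucl m :=
    (Dmap m s).comp ((T : Eucl m →ₗ[ℂ] Eucl m).restrictScalars ℝ) with hG_def
  have hpoint : ∀ (j : Fin m) (w : ℂ), ‖dmap (s j) w‖ ^ 2
      = Real.sqrt (1 + φ j ^ 2) * ‖w‖ ^ 2 + φ j * ((w ^ 2).re) := by
    intro j w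
    have habs : ∀ ζ : ℂ, ‖ζ‖ ^ 2 = ζ.re * ζ.re + ζ.im * ζ.im := by
      intro ζ; rw [Complex.sq_norm, Complex.normSq_apply]
    rw [habs (dmap (s j) w), Complex.sq_norm, Complex.normSq_apply, pow_two w, Complex.mul_re,
      dmap_re, dmap_im]
    have h1 : s j * w.re * (s j * w.re) = (s j ^ 2) * (w.re * w.re) := by ring
    have h2 : w.im / s j * (w.im / s j) = ((s j)⁻¹ ^ 2) * (w.im * w.im) := by
      rw [div_eq_mul_inv]; ring
    rw [h1, h2, hs_sq j, hs_inv_sq j]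
    ring
  have hGz : ∀ (z : Eucl m) (j : Fin m), G z j = dmap (s j) (T z j) := fun z j => rfl
  have hset : {z : Eucl m |
        ∑ j, (Real.sqrt (1 + φ j ^ 2) * ‖T z j‖ ^ 2 + φ j * ((T z j) ^ 2).re) < V}
      = G ⁻¹' Metric.ball 0 (Real.sqrt V) := by
    ext z
    simp only [Set.mem_setOf_eq, Set.mem_preimage, mem_ball_zero_iff]
    rw [EuclideanSpace.norm_eq, Real.sqrt_lt_sqrt_iff_of_pos hV]
    have hsum : ∑ j, ‖G z j‖ ^ 2
        = ∑ j, (Real.sqrt (1 + φ j ^ 2) * ‖T z j‖ ^ 2 + φ j * ((T z j) ^ 2).re) := by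
      refine Finset.sum_congr rfl fun j _ => ?_
      rw [hGz z j, hpoint]
    rw [hsum]
  have hdetT : LinearMap.det (T : Eucl m →ₗ[ℂ] Eucl m) ≠ 0 := T.isUnit_det'.ne_zero
  have hdetG : LinearMap.det G = Complex.normSq (LinearMap.det (T : Eucl m →ₗ[ℂ] Eucl m)) := by
    rw [hG_def, LinearMap.det_comp, det_Dmap m s (fun j => (hs_pos j).ne'), one_mul,
      det_restrict]
  have hnormSq_pos : 0 < Complex.normSq (LinearMap.det (T : Eucl m →ₗ[ℂ] Eucl m)) :=
    Complex.normSq_pos.2 hdetT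
  have hdetG_ne : LinearMap.det G ≠ 0 := by rw [hdetG]; exact hnormSq_pos.ne'
  have hrank : Module.finrank ℝ (Eucl m) = 2 * m := by
    rw [← Module.finrank_mul_finrank ℝ ℂ (Eucl m), Complex.finrank_real_complex,
      finrank_euclideanSpace, Fintype.card_fin]
  have hball : volume (Metric.ball (0 : Eucl m) (Real.sqrt V))
      = ENNReal.ofReal (V ^ m * (Real.pi ^ m / Nat.factorial m)) := by
    rw [InnerProductSpace.volume_ball, hrank]
    have h1 : ENNReal.ofReal (Real.sqrt V) ^ (2 * m) = ENNReal.ofReal (V ^ m) := by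
      rw [← ENNReal.ofReal_pow (Real.sqrt_nonneg V), pow_mul, Real.sq_sqrt hV.le]
    have h2 : Real.sqrt Real.pi ^ (2 * m) = Real.pi ^ m := by
      rw [pow_mul, Real.sq_sqrt Real.pi_nonneg]
    have h3 : ((2 * m : ℕ) : ℝ) / 2 + 1 = (m : ℝ) + 1 := by push_cast; ring
    rw [h1, h2, h3, Real.Gamma_nat_eq_factorial]
    rw [← ENNReal.ofReal_mul (by positivity)]
  rw [hset, MeasureTheory.Measure.addHaar_preimage_linearMap volume hdetG_ne, hball, hdetG]
  rw [← ENNReal.ofReal_mul (by positivity)]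
  congr 1
  rw [abs_of_pos (by positivity), Complex.sq_norm]
  field_simp
end
end

section
/- Let m ≥ 1, let H be an m×m positive definite hermitian complex matrix, and let S be an m×m symmetric complex matrix. Then there exist an invertible m×m complex matrix T and nonnegative real numbers φ₁, …, φ_m such that for every z ∈ ℂ^m: z* H z + Re(zᵀ S z) = Σ_{j=1}^m ( |(Tz)_j|² + φ_j Re((Tz)_j²) ). -/
set_option linter.unusedVariables false

open scoped ComplexConjugate
open Module InnerProductSpace

variable {E : Type*} [NormedAddCommGroup E] [InnerProductSpace ℂ E] [FiniteDimensional ℂ E]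

/-- Existence of a "con-eigenvector" for a symmetric bilinear form: a unit vector `v`
with `β v y = σ ⟪v, y⟫` for all `y`, with `σ ≥ 0`. -/
theorem exists_con_eigenvector (n : ℕ) (hn : finrank ℂ E = n + 1)
    (β : E →ₗ[ℂ] E →ₗ[ℂ] ℂ) (hβ : ∀ x y, β x y = β y x) :
    ∃ (v : E) (σ : ℝ), ‖v‖ = 1 ∧ 0 ≤ σ ∧ ∀ y, β v y = σ * ⟪v, y⟫_ℂ := by
  classical
  set g : E → E := fun x => (toDual ℂ E).symm (LinearMap.toContinuousLinearMap (β x)) with hgdef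
  have hg : ∀ x y, ⟪g x, y⟫_ℂ = β x y := by
    intro x y
    simp [hgdef, toDual_symm_apply]
  have hg_add : ∀ x x', g (x + x') = g x + g x' := by
    intro x x'
    apply ext_inner_right ℂ
    intro y
    rw [inner_add_left, hg, hg, hg]
    simp
  have hg_smul : ∀ (c : ℂ) (x), g (c • x) = conj c • g x := by
    intro c x
    apply ext_inner_right ℂ
    intro y
    rw [hg, inner_smul_left, hg]
    simp
  set M : E →ₗ[ℂ] E :=
    { toFun := fun x => g (g x)
      map_add' := by
        intro x x'
        show g (g (x + x')) = g (g x) + g (g x')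
        rw [hg_add, hg_add]
      map_smul' := by
        intro c x
        show g (g (c • x)) = c • g (g x)
        rw [hg_smul, hg_smul]
        simp } with hMdef
  have hM : M.IsSymmetric := by
    intro x y
    have h1 : ⟪M x, y⟫_ℂ = ⟪g y, g x⟫_ℂ := by
      rw [hMdef]; dsimp; rw [hg, hβ, ← hg]
    have h2 : ⟪x, M y⟫_ℂ = ⟪g y, g x⟫_ℂ := by
      rw [← inner_conj_symm, hMdef]; dsimp; rw [hg, hβ, ← hg, inner_conj_symm]
    rw [h1, h2]
  -- take an eigenvector
  obtain ⟨w, μ, hw1, hMw⟩ : ∃ (w : E) (μ : ℝ), ‖w‖ = 1 ∧ M w = (μ : ℂ) • w := by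
    refine ⟨hM.eigenvectorBasis hn 0, hM.eigenvalues hn 0,
      (hM.eigenvectorBasis hn).orthonormal.1 0, hM.apply_eigenvectorBasis hn 0⟩
  have hμ : (μ : ℂ) = (‖g w‖ : ℂ) ^ 2 := by
    have h1 : ⟪M w, w⟫_ℂ = conj (μ : ℂ) * ⟪w, w⟫_ℂ := by rw [hMw, inner_smul_left]
    have h2 : ⟪M w, w⟫_ℂ = ⟪g w, g w⟫_ℂ := by
      rw [hMdef]; dsimp; rw [hg, hβ, ← hg]
    have h3 : ⟪w, w⟫_ℂ = 1 := by
      rw [inner_self_eq_norm_sq_to_K, hw1]; norm_num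
    have h4 : ⟪g w, g w⟫_ℂ = (‖g w‖ : ℂ) ^ 2 := inner_self_eq_norm_sq_to_K _
    rw [h3, mul_one, Complex.conj_ofReal] at h1
    rw [← h1, h2, h4]
  have hμ' : μ = ‖g w‖ ^ 2 := by exact_mod_cast hμ
  have hμ0 : 0 ≤ μ := hμ' ▸ sq_nonneg _
  set σ := Real.sqrt μ with hσdef
  have hσ0 : 0 ≤ σ := Real.sqrt_nonneg _
  have hσμ : σ * σ = μ := Real.mul_self_sqrt hμ0
  set u : E := g w + (σ : ℂ) • w with hudef
  have hgu : g u = (σ : ℂ) • u := by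
    have hMw' : g (g w) = (μ : ℂ) • w := hMw
    show g (g w + (σ : ℂ) • w) = (σ : ℂ) • (g w + (σ : ℂ) • w)
    rw [hg_add, hg_smul, Complex.conj_ofReal, hMw', smul_add, smul_smul,
      ← Complex.ofReal_mul, hσμ]
    abel
  -- produce a unit con-eigenvector
  obtain ⟨v, hv1, hgv⟩ : ∃ v : E, ‖v‖ = 1 ∧ g v = (σ : ℂ) • v := by
    by_cases hu : u = 0
    · -- then g w = -σ w ; use I • w
      have hgw : g w = -((σ : ℂ) • w) := by
        have := hudef ▸ hu
        rwa [add_eq_zero_iff_eq_neg] at this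
      refine ⟨Complex.I • w, ?_, ?_⟩
      · rw [norm_smul, Complex.norm_I, one_mul, hw1]
      · rw [hg_smul, hgw, Complex.conj_I, smul_neg, smul_smul, smul_smul]
        module
    · refine ⟨(‖u‖⁻¹ : ℝ) • u, ?_, ?_⟩
      · rw [norm_smul]
        simp [norm_ne_zero_iff.mpr hu]
      · have : ((‖u‖⁻¹ : ℝ) : ℂ) • u = ((‖u‖⁻¹ : ℝ) : ℂ) • u := rfl
        rw [← Complex.coe_smul, hg_smul, Complex.conj_ofReal, hgu, smul_smul, smul_smul]
        rw [mul_comm]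
  refine ⟨v, σ, hv1, hσ0, fun y => ?_⟩
  rw [← hg, hgv, inner_smul_left, Complex.conj_ofReal]

/-- Abstract Takagi diagonalization: an orthonormal family diagonalizing a symmetric
bilinear form with nonnegative diagonal. -/
theorem takagi_aux : ∀ (n : ℕ) (E : Type) [NormedAddCommGroup E] [InnerProductSpace ℂ E]
    [FiniteDimensional ℂ E], finrank ℂ E = n →
    ∀ (β : E →ₗ[ℂ] E →ₗ[ℂ] ℂ), (∀ x y, β x y = β y x) →
    ∃ (b : Fin n → E) (φ : Fin n → ℝ), Orthonormal ℂ b ∧ (∀ j, 0 ≤ φ j) ∧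
      ∀ j k, β (b j) (b k) = if j = k then (φ j : ℂ) else 0 := by
  intro n
  induction n with
  | zero =>
    intro E _ _ _ hn β hβ
    refine ⟨finZeroElim, finZeroElim, ?_, fun j => j.elim0, fun j k => j.elim0⟩
    constructor
    · exact fun i => i.elim0
    · exact fun i => i.elim0
  | succ n ih =>
    intro E _ _ _ hn β hβ
    obtain ⟨v, σ, hv1, hσ0, hβv⟩ := exists_con_eigenvector n hn β hβ
    have hv0 : v ≠ 0 := by
      intro h
      rw [h, norm_zero] at hv1
      norm_num at hv1
    haveI : Fact (finrank ℂ E = n + 1) := ⟨hn⟩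
    set V := (ℂ ∙ v)ᗮ with hVdef
    have hVrank : finrank ℂ V = n := Submodule.finrank_orthogonal_span_singleton hv0
    -- restricted bilinear form
    set β' : V →ₗ[ℂ] V →ₗ[ℂ] ℂ := LinearMap.mk₂ ℂ (fun x y => β (x : E) (y : E))
      (by intro x x' y; simp) (by intro c x y; simp) (by intro x y y'; simp)
      (by intro c x y; simp) with hβ'def
    have hβ'sym : ∀ x y : V, β' x y = β' y x := fun x y => hβ x y
    obtain ⟨b', φ', hb'on, hφ'0, hb'diag⟩ := ih V hVrank β' hβ'sym
    refine ⟨Fin.cons v (fun j => (b' j : E)), Fin.cons σ φ', ?_, ?_, ?_⟩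
    · rw [orthonormal_iff_ite]
      intro j k
      refine Fin.cases ?_ ?_ j <;> [skip; intro j'] <;>
        refine Fin.cases ?_ ?_ k <;> [skip; intro k'; skip; intro k']
      · simp [inner_self_eq_norm_sq_to_K, hv1]
      · have : ((b' k' : E)) ∈ V := (b' k').2
        rw [Submodule.mem_orthogonal] at this
        simp [Fin.cons_zero, Fin.cons_succ, this v (Submodule.mem_span_singleton_self v),
          (Fin.succ_ne_zero k').symm]
      · have : ((b' j' : E)) ∈ V := (b' j').2
        rw [Submodule.mem_orthogonal] at this
        have h0 := this v (Submodule.mem_span_singleton_self v)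
        rw [← inner_conj_symm] at h0
        simp only [Fin.cons_zero, Fin.cons_succ]
        rw [← inner_conj_symm]
        simp only [map_eq_zero] at h0 ⊢
        simp [h0, Fin.succ_ne_zero j']
      · have := (orthonormal_iff_ite.mp hb'on) j' k'
        simp only [Fin.cons_succ]
        rw [← Submodule.coe_inner, this]
        simp [Fin.succ_inj]
    · intro j
      refine Fin.cases ?_ ?_ j
      · simpa using hσ0
      · intro j'; simpa using hφ'0 j'
    · intro j k
      refine Fin.cases ?_ ?_ j <;> [skip; intro j'] <;>
        refine Fin.cases ?_ ?_ k <;> [skip; intro k'; skip; intro k']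
      · simp only [Fin.cons_zero]
        rw [hβv v, inner_self_eq_norm_sq_to_K, hv1]
        norm_num
      · have hmem : ((b' k' : E)) ∈ V := (b' k').2
        rw [Submodule.mem_orthogonal] at hmem
        simp only [Fin.cons_zero, Fin.cons_succ]
        rw [hβv, hmem v (Submodule.mem_span_singleton_self v), mul_zero]
        simp [(Fin.succ_ne_zero k').symm]
      · have hmem : ((b' j' : E)) ∈ V := (b' j').2
        rw [Submodule.mem_orthogonal] at hmem
        simp only [Fin.cons_zero, Fin.cons_succ]
        rw [hβ _ v, hβv, hmem v (Submodule.mem_span_singleton_self v), mul_zero]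
        simp [Fin.succ_ne_zero j']
      · have := hb'diag j' k'
        simp only [Fin.cons_succ]
        rw [show β (b' j' : E) (b' k' : E) = β' (b' j') (b' k') from rfl, this]
        simp [Fin.succ_inj]

open Matrix in
theorem takagi_matrix (m : ℕ) (A : Matrix (Fin m) (Fin m) ℂ) (hA : A.IsSymm) :
    ∃ U : Matrix (Fin m) (Fin m) ℂ, star U * U = 1 ∧ U * star U = 1 ∧
      ∃ φ : Fin m → ℝ, (∀ j, 0 ≤ φ j) ∧
        A = Uᵀ * Matrix.diagonal (fun j => (φ j : ℂ)) * U := by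
  classical
  set E := EuclideanSpace ℂ (Fin m) with hEdef
  set β : E →ₗ[ℂ] E →ₗ[ℂ] ℂ := LinearMap.mk₂ ℂ
      (fun x y => (x : Fin m → ℂ) ⬝ᵥ (A *ᵥ (y : Fin m → ℂ)))
      (by
        intro x x' y
        show ((x : Fin m → ℂ) + (x' : Fin m → ℂ)) ⬝ᵥ (A *ᵥ y) = _
        rw [add_dotProduct])
      (by
        intro c x y
        show (c • (x : Fin m → ℂ)) ⬝ᵥ (A *ᵥ y) = c * ((x : Fin m → ℂ) ⬝ᵥ (A *ᵥ y))
        rw [smul_dotProduct, smul_eq_mul])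
      (by
        intro x y y'
        show (x : Fin m → ℂ) ⬝ᵥ (A *ᵥ ((y : Fin m → ℂ) + (y' : Fin m → ℂ))) = _
        rw [mulVec_add, dotProduct_add])
      (by
        intro c x y
        show (x : Fin m → ℂ) ⬝ᵥ (A *ᵥ (c • (y : Fin m → ℂ))) = c * ((x : Fin m → ℂ) ⬝ᵥ (A *ᵥ y))
        rw [mulVec_smul, dotProduct_smul, smul_eq_mul]) with hβdef
  have hβsym : ∀ x y : E, β x y = β y x := by
    intro x y
    show (x : Fin m → ℂ) ⬝ᵥ (A *ᵥ y) = (y : Fin m → ℂ) ⬝ᵥ (A *ᵥ x)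
    rw [dotProduct_mulVec, ← mulVec_transpose, hA.eq, dotProduct_comm]
  obtain ⟨b, φ, hbon, hφ0, hbdiag⟩ :=
    takagi_aux m E (finrank_euclideanSpace_fin) β hβsym
  set U : Matrix (Fin m) (Fin m) ℂ := Matrix.of fun j i => star (b j i) with hUdef
  have hinner : ∀ j k, ⟪b j, b k⟫_ℂ = ∑ i, star (b j i) * b k i := by
    intro j k
    rw [EuclideanSpace.inner_eq_star_dotProduct]
    simp only [dotProduct, Pi.star_apply]
    exact Finset.sum_congr rfl fun i _ => mul_comm _ _
  have hUU : U * star U = 1 := by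
    ext j k
    have := (orthonormal_iff_ite.mp hbon) j k
    rw [hinner] at this
    simp only [Matrix.mul_apply, Matrix.one_apply, hUdef, Matrix.star_apply,
      Matrix.of_apply, star_star]
    rw [this]
  have hUU' : star U * U = 1 := mul_eq_one_comm.mp hUU
  refine ⟨U, hUU', hUU, φ, hφ0, ?_⟩
  have hD : (star U)ᵀ * A * star U = Matrix.diagonal (fun j => (φ j : ℂ)) := by
    ext j k
    have hd := hbdiag j k
    have hβval : β (b j) (b k) = ∑ p, ∑ q, b j p * A p q * b k q := by
      show (b j : Fin m → ℂ) ⬝ᵥ (A *ᵥ (b k : Fin m → ℂ)) = _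
      simp only [dotProduct, mulVec, Finset.mul_sum]
      exact Finset.sum_congr rfl fun p _ => Finset.sum_congr rfl fun q _ => by
        show b j p * (A p q * b k q) = b j p * A p q * b k q
        ring
    rw [hβval] at hd
    simp only [Matrix.mul_apply, Matrix.transpose_apply, Matrix.star_apply, hUdef,
      Matrix.of_apply, star_star, Matrix.diagonal_apply]
    rw [← hd]
    simp only [Finset.sum_mul]
    conv_lhs => rw [Finset.sum_comm]
  have h1 : Uᵀ * (star U)ᵀ = 1 := by
    rw [← Matrix.transpose_mul, hUU', Matrix.transpose_one]
  calc A = (Uᵀ * (star U)ᵀ) * A * (star U * U) := by rw [h1, hUU']; simp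
    _ = Uᵀ * ((star U)ᵀ * A * star U) * U := by
        simp only [Matrix.mul_assoc]
    _ = Uᵀ * Matrix.diagonal (fun j => (φ j : ℂ)) * U := by rw [hD, Matrix.mul_assoc]

open scoped ComplexOrder
open Matrix
open scoped MatrixOrder

/-- Simultaneous normal form (cf. Webster's Lemma 4.1): given a positive definite hermitian
`H` and a symmetric `S`, there are an invertible `T` and `φ_j ≥ 0` with
`z*Hz + Re(zᵀSz) = Σ_j (|(Tz)_j|² + φ_j Re((Tz)_j²))` for all `z ∈ ℂᵐ`. -/
theorem hermitian_symmetric_normal_form (m : ℕ) (hm : 1 ≤ m)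
    (H S : Matrix (Fin m) (Fin m) ℂ) (hH : H.PosDef) (hS : S.IsSymm) :
    ∃ T : Matrix (Fin m) (Fin m) ℂ, IsUnit T.det ∧
      ∃ φ : Fin m → ℝ, (∀ j, 0 ≤ φ j) ∧
        ∀ z : Fin m → ℂ,
          (∑ j, ∑ k, H j k * z j * star (z k)).re + (∑ j, ∑ k, S j k * z j * z k).re
            = ∑ j, (‖T.mulVec z j‖ ^ 2 + φ j * ((T.mulVec z j) ^ 2).re) := by
  classical
  have hHT : Hᵀ.PosDef := hH.transpose
  set P := CFC.sqrt Hᵀ with hPdef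
  have hPP : P * P = Hᵀ := CFC.sqrt_mul_sqrt_self Hᵀ hHT.posSemidef.nonneg
  have hPherm : P.IsHermitian := (CFC.sqrt_nonneg Hᵀ).posSemidef.1
  have hPdet : IsUnit P.det := by
    rw [isUnit_iff_ne_zero]
    intro h0
    have h1 : P.det * P.det = Hᵀ.det := by rw [← Matrix.det_mul, hPP]
    rw [h0, mul_zero] at h1
    exact (hHT.det_pos).ne' h1.symm
  have hPinv : P⁻¹ * P = 1 := Matrix.nonsing_inv_mul P hPdet
  have hPinv' : P * P⁻¹ = 1 := Matrix.mul_nonsing_inv P hPdet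
  set A := (P⁻¹)ᵀ * S * (P⁻¹) with hAdef
  have hAsym : A.IsSymm := by
    show Aᵀ = A
    rw [hAdef, Matrix.transpose_mul, Matrix.transpose_mul, Matrix.transpose_transpose,
      hS.eq, Matrix.mul_assoc]
  obtain ⟨U, hU1, hU2, φ, hφ0, hAeq⟩ := takagi_matrix m A hAsym
  set D := Matrix.diagonal (fun j => (φ j : ℂ)) with hDdef
  set T := U * P with hTdef
  have hUdet : IsUnit U.det := by
    refine IsUnit.of_mul_eq_one (star U).det ?_
    rw [← Matrix.det_mul, hU2, Matrix.det_one]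
  have hTdet : IsUnit T.det := by
    rw [hTdef, Matrix.det_mul]
    exact hUdet.mul hPdet
  -- key matrix identities
  have hTT : Tᴴ * T = Hᵀ := by
    rw [hTdef, Matrix.conjTranspose_mul, Matrix.mul_assoc, ← Matrix.mul_assoc Uᴴ U P,
      show Uᴴ * U = 1 from hU1, Matrix.one_mul, hPherm.eq, hPP]
  have hSTT : S = Tᵀ * D * T := by
    have hS' : S = Pᵀ * A * P := by
      rw [hAdef, Matrix.mul_assoc, Matrix.mul_assoc, hPinv, Matrix.mul_one,
        ← Matrix.mul_assoc, ← Matrix.transpose_mul, hPinv, Matrix.transpose_one,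
        Matrix.one_mul]
    rw [hS', hAeq, hTdef, Matrix.transpose_mul]
    simp only [Matrix.mul_assoc]
  refine ⟨T, hTdet, φ, hφ0, ?_⟩
  intro z
  set w := T.mulVec z with hwdef
  have key1 : ∑ j, ∑ k, H j k * z j * star (z k) = w ⬝ᵥ star w := by
    have h1 : w ⬝ᵥ star w = (H *ᵥ star z) ⬝ᵥ z := by
      rw [hwdef, Matrix.star_mulVec, dotProduct_comm, Matrix.dotProduct_mulVec,
        Matrix.vecMul_vecMul, hTT, Matrix.vecMul_transpose]
    rw [h1]
    simp only [dotProduct, Matrix.mulVec, Finset.sum_mul]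
    exact Finset.sum_congr rfl fun j _ => Finset.sum_congr rfl fun k _ => by
      show H j k * z j * star (z k) = H j k * star (z k) * z j
      ring
  have key2 : ∑ j, ∑ k, S j k * z j * z k = ∑ j, (φ j : ℂ) * (w j * w j) := by
    have h2 : z ⬝ᵥ (S *ᵥ z) = w ⬝ᵥ (D *ᵥ w) := by
      rw [hSTT, ← Matrix.mulVec_mulVec, ← Matrix.mulVec_mulVec,
        Matrix.dotProduct_mulVec, Matrix.vecMul_transpose, ← hwdef]
    have h3 : z ⬝ᵥ (S *ᵥ z) = ∑ j, ∑ k, S j k * z j * z k := by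
      simp only [dotProduct, Matrix.mulVec, Finset.mul_sum]
      exact Finset.sum_congr rfl fun j _ => Finset.sum_congr rfl fun k _ => by
        show z j * (S j k * z k) = S j k * z j * z k
        ring
    have h4 : w ⬝ᵥ (D *ᵥ w) = ∑ j, (φ j : ℂ) * (w j * w j) := by
      simp only [dotProduct]
      exact Finset.sum_congr rfl fun j _ => by
        rw [hDdef, Matrix.mulVec_diagonal]
        ring
    rw [← h3, h2, h4]
  rw [key1, key2]
  rw [show w ⬝ᵥ star w = ∑ j, w j * star (w j) from rfl]
  rw [Complex.re_sum, Complex.re_sum, ← Finset.sum_add_distrib]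
  refine Finset.sum_congr rfl fun j _ => ?_
  congr 1
  · rw [Complex.star_def, Complex.mul_conj, Complex.ofReal_re, ← Complex.sq_norm]
  · rw [Complex.re_ofReal_mul, pow_two]
end

section
/- Let m ≥ 1, let T : ℂ^m → ℂ^m be an invertible ℂ-linear map with component functionals T₁, …, T_m, let φ₁, …, φ_m ≥ 0, and let f be a real-valued function defined on a neighborhood of 0 in ℂ^m with f(z) = Σ_{j=1}^m ( |T_j z|² + φ_j Re((T_j z)²) ) + o(‖z‖²) as z → 0. If f(z) ≥ 0 for all z in some neighborhood of 0, then φ_j ≤ 1 for every j. -/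
open Asymptotics Filter
open scoped Topology

noncomputable section

/-- If `f(z) = Σ_j (|T_j z|² + φ_j Re((T_j z)²)) + o(‖z‖²)` near `0` with `T` invertible
and `φ_j ≥ 0`, and `f ≥ 0` near `0`, then every `φ_j ≤ 1`. -/
theorem coeff_le_one_of_nonneg (m : ℕ) (hm : 1 ≤ m) (T : Eucl m ≃ₗ[ℂ] Eucl m)
    (φ : Fin m → ℝ) (hφ : ∀ j, 0 ≤ φ j) (f : Eucl m → ℝ)
    (hf : (fun z : Eucl m =>
        f z - ∑ j, (‖T z j‖ ^ 2 + φ j * ((T z j) ^ 2).re))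
      =o[𝓝 0] fun z : Eucl m => ‖z‖ ^ 2)
    (hnn : ∀ᶠ z in 𝓝 (0 : Eucl m), 0 ≤ f z) :
    ∀ j, φ j ≤ 1 := by
  intro j
  by_contra hgt
  push_neg at hgt
  set c : ℝ := φ j - 1 with hc
  have hc0 : 0 < c := by linarith
  set Tc := T.toContinuousLinearEquiv with hTc
  set C : ℝ := ‖(Tc.symm : Eucl m →L[ℂ] Eucl m)‖ with hCdef
  have hC0 : (0:ℝ) ≤ C := norm_nonneg _
  set ε : ℝ := c / (2 * (C ^ 2 + 1)) with hεdef
  have hε0 : 0 < ε := by positivity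
  have hεC : ε * C ^ 2 < c := by
    rw [hεdef, div_mul_eq_mul_div, div_lt_iff₀ (by positivity)]
    nlinarith
  have hO := hf.def hε0
  have hev : ∀ᶠ z in 𝓝 (0 : Eucl m),
      0 ≤ f z ∧
        ‖f z - ∑ k, (‖T z k‖ ^ 2 + φ k * ((T z k) ^ 2).re)‖
          ≤ ε * ‖‖z‖ ^ 2‖ := hnn.and hO
  set v : Eucl m := EuclideanSpace.single j Complex.I with hv
  have hvnorm : ‖v‖ = 1 := by
    rw [hv, EuclideanSpace.norm_single, Complex.norm_I]
  set z : ℝ → Eucl m := fun t => T.symm ((t : ℂ) • v) with hz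
  have hpath : Tendsto z (𝓝[>] (0:ℝ)) (𝓝 (0 : Eucl m)) := by
    have hcont : Continuous z := by
      have : Continuous fun t : ℝ => ((t : ℂ) • v) :=
        (Complex.continuous_ofReal).smul continuous_const
      exact Tc.symm.continuous.comp this
    have : Tendsto z (𝓝 (0:ℝ)) (𝓝 (0 : Eucl m)) := by
      have h0 : z 0 = 0 := by simp [hz]
      simpa [h0] using hcont.tendsto 0
    exact this.mono_left nhdsWithin_le_nhds
  have hev' := (hpath.eventually hev).and self_mem_nhdsWithin
  obtain ⟨t, ⟨h0f, hbound⟩, ht⟩ := hev'.exists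
  have ht0 : 0 < t := ht
  -- compute T (z t)
  have hTz : T (z t) = (t : ℂ) • v := T.apply_symm_apply _
  have hTzk : ∀ k, T (z t) k = (t : ℂ) * (if k = j then Complex.I else 0) := by
    intro k
    rw [hTz]
    simp [hv, EuclideanSpace.single_apply]
  -- compute the sum
  have hsum : ∑ k, (‖T (z t) k‖ ^ 2 + φ k * ((T (z t) k) ^ 2).re)
      = -(c * t ^ 2) := by
    rw [Finset.sum_eq_single j]
    · rw [hTzk j, if_pos rfl]
      have h1 : ‖(t:ℂ) * Complex.I‖ = |t| := by
        simp [norm_mul]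
      have h2 : (((t:ℂ) * Complex.I) ^ 2).re = -(t ^ 2) := by
        have he : ((t:ℂ) * Complex.I) ^ 2 = -(((t ^ 2 : ℝ)) : ℂ) := by
          push_cast
          rw [mul_pow, Complex.I_sq]
          ring
        rw [he]
        simp [← Complex.ofReal_pow]
      rw [h1, h2, sq_abs, hc]
      ring
    · intro k _ hk
      rw [hTzk k, if_neg hk]
      simp
    · simp
  -- norm bound on z t
  have hznorm : ‖z t‖ ≤ C * t := by
    have h1 : z t = Tc.symm ((t : ℂ) • v) := rfl
    have h2 : ‖Tc.symm ((t : ℂ) • v)‖ ≤ C * ‖(t : ℂ) • v‖ :=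
      (Tc.symm : Eucl m →L[ℂ] Eucl m).le_opNorm _
    have h3 : ‖(t : ℂ) • v‖ = t := by
      rw [norm_smul, hvnorm, mul_one, Complex.norm_real, Real.norm_eq_abs, abs_of_pos ht0]
    rw [h1]
    calc ‖Tc.symm ((t : ℂ) • v)‖ ≤ C * ‖(t : ℂ) • v‖ := h2
      _ = C * t := by rw [h3]
  -- conclude
  rw [hsum] at hbound
  have hzsq : ‖z t‖ ^ 2 ≤ C ^ 2 * t ^ 2 := by
    have := mul_self_le_mul_self (norm_nonneg (z t)) hznorm
    calc ‖z t‖ ^ 2 = ‖z t‖ * ‖z t‖ := sq _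
      _ ≤ (C * t) * (C * t) := this
      _ = C ^ 2 * t ^ 2 := by ring
  have hnn2 : (0:ℝ) ≤ ‖z t‖ ^ 2 := by positivity
  rw [Real.norm_of_nonneg hnn2] at hbound
  have habs : |f (z t) - (-(c * t ^ 2))| ≤ ε * (C ^ 2 * t ^ 2) := by
    refine le_trans ?_ (by nlinarith : ε * ‖z t‖ ^ 2 ≤ ε * (C ^ 2 * t ^ 2))
    simpa [Real.norm_eq_abs] using hbound
  have h1 : f (z t) ≤ -(c * t ^ 2) + ε * (C ^ 2 * t ^ 2) := by
    have := abs_le.mp habs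
    linarith [this.2]
  nlinarith [sq_nonneg t, mul_pos ht0 ht0]
end
end
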